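/- Inverse law of exponential Riordan arrays: let g, f, f̄ be formal power series over ℚ such that the constant coefficient of g is nonzero, the constant coefficients of f and f̄ are 0, and f∘f̄ = X and f̄∘f = X (composition of formal power series). For power series G, F with F(0)=0 define T(G,F)(n,k) = (n!/k!)·(coefficient of X^n in G·F^k). Then for all natural numbers n and k, ∑_{j=0}^{n} T(g,f)(n,j) · T((g∘f̄)⁻¹, f̄)(j,k) equals 1 if n = k and 0 otherwise, where (g∘f̄)⁻¹ is the multiplicative inverse power series of g∘f̄. -/

import Mathlib

open PowerSeries Finset

/-- Substitution (composition) of formal power series: `substPS f u = u ∘ f`,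
the usual composition `∑ₙ uₙ fⁿ`, well-defined coefficient-wise when `f` has zero
constant coefficient. -/
noncomputable def substPS (f u : PowerSeries ℚ) : PowerSeries ℚ :=
  PowerSeries.mk fun n => ∑ j ∈ Finset.range (n + 1),
    (PowerSeries.coeff j u) * PowerSeries.coeff n (f ^ j)

/-- The `(n,k)` entry of the exponential Riordan array `[G, F]`. -/
noncomputable def riordanEntry (G F : PowerSeries ℚ) (n k : ℕ) : ℚ :=
  ((n.factorial : ℚ) / (k.factorial : ℚ)) * PowerSeries.coeff n (G * F ^ k)

namespace RiordanAux

lemma coeff_substPS (f u : PowerSeries ℚ) (n : ℕ) :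
    PowerSeries.coeff n (substPS f u) = ∑ j ∈ Finset.range (n + 1),
      (PowerSeries.coeff j u) * PowerSeries.coeff n (f ^ j) := by
  simp [substPS]

/-- L1: coefficients of powers vanish below the exponent. -/
lemma coeff_pow_eq_zero {f : PowerSeries ℚ} (hf : PowerSeries.constantCoeff f = 0)
    {j n : ℕ} (h : n < j) : PowerSeries.coeff n (f ^ j) = 0 := by
  obtain ⟨r, hr⟩ : (X : PowerSeries ℚ) ∣ f := PowerSeries.X_dvd_iff.mpr hf
  have : f ^ j = X ^ j * r ^ j := by rw [hr, mul_pow]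
  rw [this, PowerSeries.coeff_mul]
  apply Finset.sum_eq_zero
  rintro ⟨a, b⟩ hp
  rw [Finset.HasAntidiagonal.mem_antidiagonal] at hp
  have ha : a ≠ j := by omega
  simp [PowerSeries.coeff_X_pow, ha]

/-- L2: extend the defining sum of `substPS`. -/
lemma coeff_substPS_ext {f : PowerSeries ℚ} (hf : PowerSeries.constantCoeff f = 0)
    (u : PowerSeries ℚ) {n N : ℕ} (hN : n < N) :
    PowerSeries.coeff n (substPS f u) = ∑ j ∈ Finset.range N,
      (PowerSeries.coeff j u) * PowerSeries.coeff n (f ^ j) := by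
  rw [coeff_substPS]
  apply Finset.sum_subset
  · exact Finset.range_subset_range.mpr (by omega)
  · intro j hj hj'
    rw [Finset.mem_range] at hj'
    rw [coeff_pow_eq_zero hf (by omega), mul_zero]

lemma constantCoeff_substPS (f u : PowerSeries ℚ) :
    PowerSeries.constantCoeff (substPS f u) = PowerSeries.constantCoeff u := by
  have := coeff_substPS f u 0
  simpa using this

lemma substPS_one (f : PowerSeries ℚ) : substPS f 1 = 1 := by
  ext n
  rw [coeff_substPS]
  rw [Finset.sum_eq_single 0]
  · simp
  · intro j hj hj0
    simp [PowerSeries.coeff_one, hj0]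
  · simp

/-- L5: key linearity lemma. -/
lemma coeff_mul_substPS {f : PowerSeries ℚ} (hf : PowerSeries.constantCoeff f = 0)
    (g u : PowerSeries ℚ) (n : ℕ) :
    PowerSeries.coeff n (g * substPS f u) = ∑ j ∈ Finset.range (n + 1),
      (PowerSeries.coeff j u) * PowerSeries.coeff n (g * f ^ j) := by
  rw [PowerSeries.coeff_mul]
  have step : ∀ p ∈ Finset.HasAntidiagonal.antidiagonal n,
      PowerSeries.coeff p.1 g * PowerSeries.coeff p.2 (substPS f u)
        = ∑ j ∈ Finset.range (n + 1), (PowerSeries.coeff j u) *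
            (PowerSeries.coeff p.1 g * PowerSeries.coeff p.2 (f ^ j)) := by
    intro p hp
    rw [Finset.HasAntidiagonal.mem_antidiagonal] at hp
    rw [coeff_substPS_ext hf u (N := n + 1) (by omega), Finset.mul_sum]
    apply Finset.sum_congr rfl
    intro j _
    ring
  rw [Finset.sum_congr rfl step, Finset.sum_comm]
  apply Finset.sum_congr rfl
  intro j _
  rw [PowerSeries.coeff_mul, Finset.mul_sum]

/-- L6: multiplicativity of substitution. -/
lemma substPS_mul {f : PowerSeries ℚ} (hf : PowerSeries.constantCoeff f = 0)
    (u v : PowerSeries ℚ) :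
    substPS f (u * v) = substPS f u * substPS f v := by
  ext n
  -- RHS
  rw [coeff_mul_substPS hf (substPS f u) v n]
  have rhs_term : ∀ l, PowerSeries.coeff n (substPS f u * f ^ l)
      = ∑ j ∈ Finset.range (n + 1),
          (PowerSeries.coeff j u) * PowerSeries.coeff n (f ^ (j + l)) := by
    intro l
    rw [mul_comm, coeff_mul_substPS hf (f ^ l) u n]
    apply Finset.sum_congr rfl
    intro j _
    rw [← pow_add, add_comm l j]
  -- LHS
  rw [coeff_substPS]
  have lhs_term : ∀ m ∈ Finset.range (n + 1),
      (PowerSeries.coeff m (u * v)) * PowerSeries.coeff n (f ^ m)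
        = ∑ p ∈ Finset.HasAntidiagonal.antidiagonal m, (PowerSeries.coeff p.1 u) *
            (PowerSeries.coeff p.2 v) * PowerSeries.coeff n (f ^ (p.1 + p.2)) := by
    intro m hm
    rw [PowerSeries.coeff_mul, Finset.sum_mul]
    apply Finset.sum_congr rfl
    intro p hp
    rw [Finset.HasAntidiagonal.mem_antidiagonal] at hp
    rw [hp]
  rw [Finset.sum_congr rfl lhs_term]
  -- turn LHS into a sum over pairs
  rw [← Finset.sum_biUnion (by
    intro a _ b _ hab
    simp only [Function.onFun]
    apply Finset.disjoint_left.mpr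
    intro p hpa hpb
    rw [Finset.HasAntidiagonal.mem_antidiagonal] at hpa hpb
    exact hab (hpa ▸ hpb))]
  -- RHS as a sum over the square
  have hsq : ∑ l ∈ Finset.range (n + 1), (PowerSeries.coeff l v) *
      PowerSeries.coeff n (substPS f u * f ^ l)
      = ∑ p ∈ Finset.range (n + 1) ×ˢ Finset.range (n + 1),
          (PowerSeries.coeff p.1 u) * (PowerSeries.coeff p.2 v) *
            PowerSeries.coeff n (f ^ (p.1 + p.2)) := by
    rw [Finset.sum_product]
    rw [Finset.sum_comm]
    apply Finset.sum_congr rfl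
    intro l _
    rw [rhs_term l, Finset.mul_sum]
    apply Finset.sum_congr rfl
    intro j _
    ring
  rw [hsq]
  -- compare biUnion sum with square sum
  apply Finset.sum_subset
  · intro p hp
    simp only [Finset.mem_biUnion, Finset.mem_range, Finset.HasAntidiagonal.mem_antidiagonal] at hp
    obtain ⟨m, hm, hpm⟩ := hp
    simp only [Finset.mem_product, Finset.mem_range]
    omega
  · intro p hp hp'
    simp only [Finset.mem_biUnion, Finset.mem_range, Finset.HasAntidiagonal.mem_antidiagonal] at hp'
    push_neg at hp'
    have : n < p.1 + p.2 := by
      by_contra hle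
      exact hp' (p.1 + p.2) (by omega) rfl
    rw [coeff_pow_eq_zero hf this, mul_zero]

lemma substPS_pow {f : PowerSeries ℚ} (hf : PowerSeries.constantCoeff f = 0)
    (u : PowerSeries ℚ) (m : ℕ) : substPS f (u ^ m) = (substPS f u) ^ m := by
  induction m with
  | zero => simpa using substPS_one f
  | succ m ih => rw [pow_succ, pow_succ, substPS_mul hf, ih]

/-- L8: associativity of substitution. -/
lemma substPS_assoc {f p : PowerSeries ℚ} (hf : PowerSeries.constantCoeff f = 0)
    (hp : PowerSeries.constantCoeff p = 0) (u : PowerSeries ℚ) :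
    substPS f (substPS p u) = substPS (substPS f p) u := by
  ext n
  rw [coeff_substPS, coeff_substPS]
  have step : ∀ j ∈ Finset.range (n + 1),
      (PowerSeries.coeff j (substPS p u)) * PowerSeries.coeff n (f ^ j)
        = ∑ l ∈ Finset.range (n + 1), (PowerSeries.coeff l u) *
            ((PowerSeries.coeff j (p ^ l)) * PowerSeries.coeff n (f ^ j)) := by
    intro j hj
    rw [Finset.mem_range] at hj
    rw [coeff_substPS_ext hp u (N := n + 1) (by omega), Finset.sum_mul]
    apply Finset.sum_congr rfl
    intro l _
    ring
  rw [Finset.sum_congr rfl step, Finset.sum_comm]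
  apply Finset.sum_congr rfl
  intro l _
  rw [← Finset.mul_sum]
  congr 1
  rw [← coeff_substPS f (p ^ l) n, substPS_pow hf p l]

lemma substPS_X (u : PowerSeries ℚ) : substPS X u = u := by
  ext n
  rw [coeff_substPS]
  rw [Finset.sum_eq_single n]
  · simp [PowerSeries.coeff_X_pow]
  · intro j hj hjn
    simp [PowerSeries.coeff_X_pow, Ne.symm hjn]
  · intro h
    exact absurd (Finset.self_mem_range_succ n) h

end RiordanAux

open RiordanAux in

theorem riordan_inverse (g f fbar : PowerSeries ℚ)
    (hg : PowerSeries.constantCoeff g ≠ 0)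
    (hf : PowerSeries.constantCoeff f = 0)
    (hfbar : PowerSeries.constantCoeff fbar = 0)
    (h₁ : substPS fbar f = PowerSeries.X)
    (h₂ : substPS f fbar = PowerSeries.X) (n k : ℕ) :
    ∑ j ∈ Finset.range (n + 1),
        riordanEntry g f n j * riordanEntry (substPS fbar g)⁻¹ fbar j k
      = if n = k then 1 else 0 := by
  set w : PowerSeries ℚ := substPS fbar g with hw
  set h : PowerSeries ℚ := w⁻¹ with hh
  have hw0 : PowerSeries.constantCoeff w ≠ 0 := by
    rw [hw, constantCoeff_substPS]; exact hg
  have hwh : w * h = 1 := PowerSeries.mul_inv_cancel w hw0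
  -- g * (h ∘ f) = 1
  have hsubw : substPS f w = g := by
    rw [hw, substPS_assoc hf hfbar, h₂, substPS_X]
  have hgh : g * substPS f h = 1 := by
    have := congrArg (substPS f) hwh
    rw [substPS_mul hf, substPS_one, hsubw] at this
    exact this
  -- the composed series
  have hcomp : g * substPS f (h * fbar ^ k) = X ^ k := by
    rw [substPS_mul hf, substPS_pow hf, h₂, ← mul_assoc, hgh, one_mul]
  -- main computation
  have key : ∑ j ∈ Finset.range (n + 1),
      riordanEntry g f n j * riordanEntry h fbar j k
      = ((n.factorial : ℚ) / (k.factorial : ℚ)) *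
          PowerSeries.coeff n (g * substPS f (h * fbar ^ k)) := by
    rw [coeff_mul_substPS hf, Finset.mul_sum]
    apply Finset.sum_congr rfl
    intro j _
    rw [riordanEntry, riordanEntry]
    have hjfac : (j.factorial : ℚ) ≠ 0 := by
      exact_mod_cast j.factorial_ne_zero
    field_simp
  rw [key, hcomp, PowerSeries.coeff_X_pow]
  by_cases hnk : n = k
  · subst hnk
    simp [div_self (show ((n.factorial : ℚ)) ≠ 0 by exact_mod_cast n.factorial_ne_zero)]
  · simp [hnk]
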